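/- Let Q ≪ P be a probability measure with Q = P on G, suppose E_Q[ξ|G] ∈ L∞(F) for all ξ ∈ L∞(F), and let π : L∞(F) → L∞(G) be monotone increasing and regular. Then K(X,Q) := ess inf { π(ξ) : E_Q[ξ|G] ≥ E_Q[X|G] } equals ess inf { π(ξ) : E_Q[ξ|G] = E_Q[X|G] }, i.e. the inequality constraint may be replaced by an equality constraint. -/

import Mathlib

open MeasureTheory Filter Set

noncomputable section

/-- `X` is a bounded `F`-measurable random variable (an element of `L∞(F)`). -/
def IsBddMeas {Ω : Type*} (F : MeasurableSpace Ω) (X : Ω → ℝ) : Prop :=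
  Measurable[F] X ∧ ∃ C : ℝ, ∀ ω, |X ω| ≤ C

/-- Regularity (REG) of the conditional map `π` with respect to the
sub-σ-algebra `m`: `π (X 1_A + Y 1_{Aᶜ}) = π X 1_A + π Y 1_{Aᶜ}` a.s. -/
def Regular {Ω : Type*} (F m : MeasurableSpace Ω) (μ : @Measure Ω F)
    (π : (Ω → ℝ) → Ω → ℝ) : Prop :=
  ∀ X Y : Ω → ℝ, IsBddMeas F X → IsBddMeas F Y → ∀ A : Set Ω, MeasurableSet[m] A →
    π (A.indicator X + Aᶜ.indicator Y) =ᵐ[μ] A.indicator (π X) + Aᶜ.indicator (π Y)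

/-- `I` is an essential infimum (in the `μ`-a.e. pointwise order) of the set
`S` of random variables. -/
def IsEssInf {Ω : Type*} {F : MeasurableSpace Ω} (μ : @Measure Ω F)
    (S : Set (Ω → ℝ)) (I : Ω → ℝ) : Prop :=
  (∀ f ∈ S, I ≤ᵐ[μ] f) ∧ ∀ g : Ω → ℝ, (∀ f ∈ S, g ≤ᵐ[μ] f) → g ≤ᵐ[μ] I

/-- `I` is an essential supremum (in the `μ`-a.e. pointwise order) of the set
`S` of random variables. -/
def IsEssSup {Ω : Type*} {F : MeasurableSpace Ω} (μ : @Measure Ω F)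
    (S : Set (Ω → ℝ)) (I : Ω → ℝ) : Prop :=
  (∀ f ∈ S, f ≤ᵐ[μ] I) ∧ ∀ g : Ω → ℝ, (∀ f ∈ S, f ≤ᵐ[μ] g) → I ≤ᵐ[μ] g

/-- For monotone regular `π` and `Q ≪ P` with `Q = P` on `G` (and conditional
expectations staying in `L∞`), the inequality constraint in `K(X,Q)` may be
replaced by an equality constraint. -/
theorem K_equality_constraint
    {Ω : Type*} [F : MeasurableSpace Ω] (μ : Measure Ω) [IsProbabilityMeasure μ]
    (m : MeasurableSpace Ω) (hm : m ≤ F)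
    (π : (Ω → ℝ) → Ω → ℝ) (hreg : Regular F m μ π)
    (hmono : ∀ X Y : Ω → ℝ, IsBddMeas F X → IsBddMeas F Y →
      X ≤ᵐ[μ] Y → π X ≤ᵐ[μ] π Y)
    (Q : @Measure Ω F) [IsProbabilityMeasure Q] (hQ : Q ≪ μ)
    (hQm : ∀ A : Set Ω, MeasurableSet[m] A → Q A = μ A)
    (hce : ∀ ξ : Ω → ℝ, IsBddMeas F ξ → ∃ C : ℝ, ∀ᵐ ω ∂μ, |(Q[ξ|m]) ω| ≤ C)
    (X : Ω → ℝ) (hX : IsBddMeas F X)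
    (Kineq Keq : Ω → ℝ)
    (hKineq : IsEssInf μ
      {g | ∃ ξ : Ω → ℝ, IsBddMeas F ξ ∧ (Q[X|m] ≤ᵐ[Q] Q[ξ|m]) ∧ g = π ξ} Kineq)
    (hKeq : IsEssInf μ
      {g | ∃ ξ : Ω → ℝ, IsBddMeas F ξ ∧ (Q[ξ|m] =ᵐ[Q] Q[X|m]) ∧ g = π ξ} Keq) :
    Kineq =ᵐ[μ] Keq := by
  have hbddInt : ∀ (ν : @Measure Ω F) [IsProbabilityMeasure ν] (f : Ω → ℝ),
      IsBddMeas F f → Integrable f ν := by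
    intro ν _ f ⟨hfm, C, hC⟩
    exact (integrable_const C).mono' hfm.aestronglyMeasurable
      (ae_of_all _ fun ω => by rw [Real.norm_eq_abs]; exact hC ω)
  -- easy direction: Kineq ≤ᵐ Keq, since eq-set ⊆ ineq-set
  have h₂ : Kineq ≤ᵐ[μ] Keq := by
    apply hKeq.2
    rintro f ⟨ξ, hξ, heq, rfl⟩
    exact hKineq.1 _ ⟨ξ, hξ, heq.symm.le, rfl⟩
  -- hard direction: Keq is a lower bound of the inequality set
  have h₁ : Keq ≤ᵐ[μ] Kineq := by
    apply hKineq.2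
    rintro f ⟨ξ, hξ, hge, rfl⟩
    obtain ⟨Cξ, hCξ⟩ := hce ξ hξ
    obtain ⟨CX, hCX⟩ := hce X hX
    set C : ℝ := |Cξ| + |CX| with hCdef
    have hC0 : 0 ≤ C := add_nonneg (abs_nonneg _) (abs_nonneg _)
    set Z₀ : Ω → ℝ := Q[ξ|m] - Q[X|m] with hZ₀def
    set Z : Ω → ℝ := fun ω => max 0 (min (Z₀ ω) C) with hZdef
    have hcondξ : Measurable[m] (Q[ξ|m]) := stronglyMeasurable_condExp.measurable
    have hcondX : Measurable[m] (Q[X|m]) := stronglyMeasurable_condExp.measurable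
    have hZ₀m : Measurable[m] Z₀ := hcondξ.sub hcondX
    have hZm : Measurable[m] Z := measurable_const.max (hZ₀m.min measurable_const)
    have hZ0 : ∀ ω, 0 ≤ Z ω := fun ω => le_max_left _ _
    have hZleC : ∀ ω, Z ω ≤ C := fun ω =>
      max_le hC0 (min_le_right _ _)
    have hZbdd : ∀ ω, |Z ω| ≤ C := fun ω =>
      abs_le.2 ⟨(neg_nonpos.2 hC0).trans (hZ0 ω), hZleC ω⟩
    -- Z₀ ≥ 0 μ-a.e. (transfer from Q using that the set is m-measurable)
    have hZ₀nonneg : ∀ᵐ ω ∂μ, 0 ≤ Z₀ ω := by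
      have hset : MeasurableSet[m] {ω | ¬ 0 ≤ Z₀ ω} := by
        simp only [not_le]
        exact measurableSet_lt hZ₀m measurable_const
      have hQae : ∀ᵐ ω ∂Q, 0 ≤ Z₀ ω := by
        filter_upwards [hge] with ω hω
        simpa [hZ₀def, sub_nonneg] using hω
      rw [ae_iff] at hQae ⊢
      rw [← hQm _ hset]
      exact hQae
    -- Z₀ ≤ C μ-a.e.
    have hZ₀leC : ∀ᵐ ω ∂μ, Z₀ ω ≤ C := by
      filter_upwards [hCξ, hCX] with ω h1 h2
      have : |Z₀ ω| ≤ |(Q[ξ|m]) ω| + |(Q[X|m]) ω| := abs_sub _ _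
      calc Z₀ ω ≤ |Z₀ ω| := le_abs_self _
        _ ≤ |(Q[ξ|m]) ω| + |(Q[X|m]) ω| := this
        _ ≤ Cξ + CX := add_le_add h1 h2
        _ ≤ |Cξ| + |CX| := add_le_add (le_abs_self _) (le_abs_self _)
    have hZeqμ : Z =ᵐ[μ] Z₀ := by
      filter_upwards [hZ₀nonneg, hZ₀leC] with ω h1 h2
      simp [hZdef, min_eq_left h2, max_eq_right h1]
    have hZeqQ : Z =ᵐ[Q] Z₀ := hZeqμ.filter_mono hQ.ae_le
    -- the modified variable ξ' := ξ - Z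
    set ξ' : Ω → ℝ := ξ - Z with hξ'def
    have hξ'bdd : IsBddMeas F ξ' := by
      obtain ⟨hξm, Cξ', hCξ'⟩ := hξ
      refine ⟨hξm.sub (hZm.mono hm le_rfl), Cξ' + C, fun ω => ?_⟩
      calc |ξ' ω| = |ξ ω - Z ω| := rfl
        _ ≤ |ξ ω| + |Z ω| := abs_sub _ _
        _ ≤ Cξ' + C := add_le_add (hCξ' ω) (hZbdd ω)
    have hξint : Integrable ξ Q := hbddInt Q ξ hξ
    have hZint : Integrable Z Q :=
      hbddInt Q Z ⟨hZm.mono hm le_rfl, C, hZbdd⟩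
    have hZcond : Q[Z|m] =ᵐ[Q] Z := by
      rw [condExp_of_stronglyMeasurable hm
        ((hZm.mono le_rfl le_rfl).stronglyMeasurable) hZint]
    have hcond : Q[ξ'|m] =ᵐ[Q] Q[X|m] := by
      have hsub : Q[ξ'|m] =ᵐ[Q] Q[ξ|m] - Q[Z|m] := condExp_sub hξint hZint m
      filter_upwards [hsub, hZcond, hZeqQ] with ω h1 h2 h3
      have : (Q[ξ'|m]) ω = (Q[ξ|m]) ω - Z₀ ω := by
        rw [h1]; simp [h2, h3]
      rw [this, hZ₀def]
      simp
    -- Keq ≤ π ξ' and π ξ' ≤ π ξ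
    have hKle : Keq ≤ᵐ[μ] π ξ' := hKeq.1 _ ⟨ξ', hξ'bdd, hcond, rfl⟩
    have hle : ξ' ≤ᵐ[μ] ξ := ae_of_all _ fun ω => by
      have := hZ0 ω
      simp only [hξ'def, Pi.sub_apply]
      linarith
    have hπle : π ξ' ≤ᵐ[μ] π ξ := hmono ξ' ξ hξ'bdd hξ hle
    exact hKle.trans hπle
  exact h₂.antisymm h₁
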